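/- Let M be a matroid of rank r on a finite set F, N a quotient of M on F (the identity map is a matroid morphism M → N), and Q a finite set of size r disjoint from F. Call T ⊆ F a basis of the quotient if T is independent in M and T spans N (contains a basis of N). Then the collection of subsets B̃ ⊆ Q ⊔ F with |B̃| = r such that B̃ ∩ F is a basis of the quotient is the set of bases of a matroid on Q ⊔ F. -/

import Mathlib

open Set Sum

/-- A family of finsets is the family of bases of a matroid iff it is nonempty and
satisfies the basis exchange axiom. -/
def IsBasisFamily {α : Type*} [DecidableEq α] (B : Finset α → Prop) : Prop :=
  (∃ b, B b) ∧ ∀ ⦃b₁ b₂⦄, B b₁ → B b₂ → ∀ x ∈ b₁ \ b₂,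
    ∃ y ∈ b₂ \ b₁, B (insert y (b₁.erase x))

section aux

variable {Q F : Type*} [DecidableEq F] [DecidableEq Q]

lemma set_insert_inl (q : Q) (s : Finset (Q ⊕ F)) :
    {f : F | Sum.inr f ∈ insert (Sum.inl q) s} = {f : F | Sum.inr f ∈ s} := by
  ext f; simp

lemma set_insert_inr (g : F) (s : Finset (Q ⊕ F)) :
    {f : F | Sum.inr f ∈ insert (Sum.inr g) s} = insert g {f : F | Sum.inr f ∈ s} := by
  ext f; simp

lemma set_erase_inl (q : Q) (s : Finset (Q ⊕ F)) :
    {f : F | Sum.inr f ∈ s.erase (Sum.inl q)} = {f : F | Sum.inr f ∈ s} := by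
  ext f; simp

lemma set_erase_inr (g : F) (s : Finset (Q ⊕ F)) :
    {f : F | Sum.inr f ∈ s.erase (Sum.inr g)} = {f : F | Sum.inr f ∈ s} \ {g} := by
  ext f; simp [and_comm]

lemma set_eq_coe_toRight (s : Finset (Q ⊕ F)) :
    {f : F | Sum.inr f ∈ s} = ↑s.toRight := by
  ext f; simp

end aux

/-- Let `M` be a matroid of rank `r` on `F`, `N` a quotient of `M` (every flat of `N`
is a flat of `M`), and `Q` a finite set of size `r`. Then the sets `B̃ ⊆ Q ⊔ F` of size
`r` such that `B̃ ∩ F` is independent in `M` and spanning in `N` form the bases of a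
matroid on `Q ⊔ F`. -/
theorem quotient_bases_matroid {F Q : Type*} [Fintype F] [Fintype Q]
    [DecidableEq F] [DecidableEq Q]
    (M N : Matroid F) (hME : M.E = Set.univ) (hNE : N.E = Set.univ)
    (hquot : ∀ X : Set F, N.IsFlat X → M.IsFlat X)
    (r : ℕ) (hr : ∀ B, M.IsBase B → B.ncard = r)
    (hQ : Fintype.card Q = r) :
    IsBasisFamily (fun B : Finset (Q ⊕ F) =>
      B.card = r ∧
      M.Indep {f : F | Sum.inr f ∈ B} ∧
      N.Spanning {f : F | Sum.inr f ∈ B}) := by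
  classical
  have hMsub : ∀ X : Set F, X ⊆ M.E := fun X => hME ▸ Set.subset_univ X
  have hNsub : ∀ X : Set F, X ⊆ N.E := fun X => hNE ▸ Set.subset_univ X
  -- the closure of any set is a flat
  have hflatcl : ∀ (L : Matroid F) (X : Set F), L.IsFlat (L.closure X) := by
    intro L X
    have h := L.closure_eq_subtypeClosure X
    have h2 : L.subtypeClosure.IsClosed (L.subtypeClosure ⟨X ∩ L.E, Set.inter_subset_right⟩) :=
      L.subtypeClosure.isClosed_closure _
    have h3 : (⟨L.closure X, L.closure_subset_ground X⟩ : Set.Iic L.E)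
        = L.subtypeClosure ⟨X ∩ L.E, Set.inter_subset_right⟩ := Subtype.ext h
    exact (Matroid.isClosed_iff_isFlat (F := ⟨L.closure X, L.closure_subset_ground X⟩)).1
      (h3 ▸ h2)
  -- closure comparison: M.closure X ⊆ N.closure X
  have hcl : ∀ X : Set F, M.closure X ⊆ N.closure X := by
    intro X
    rw [M.closure_def' X (hMsub X)]
    exact Set.sInter_subset_of_mem ⟨hquot _ (hflatcl N X), N.subset_closure X (hNsub X)⟩
  have hspan_of_cl_eq : ∀ X : Set F, N.E ⊆ N.closure X → N.Spanning X := by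
    intro X h
    rw [Matroid.spanning_iff_closure_eq (hNsub X)]
    exact (N.closure_subset_ground X).antisymm h
  -- spanning transfer
  have hspan : ∀ X : Set F, M.Spanning X → N.Spanning X := by
    intro X hX
    apply hspan_of_cl_eq
    have := hcl X
    rw [(Matroid.spanning_iff_closure_eq (hMsub X)).1 hX, hME] at this
    rw [hNE]
    exact this
  constructor
  · -- nonempty
    obtain ⟨B, hB⟩ := M.exists_isBase
    have hBfin : B.Finite := Set.toFinite B
    have hBset : {f : F | Sum.inr f ∈ hBfin.toFinset.image (Sum.inr : F → Q ⊕ F)} = B := by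
      ext f; simp only [Set.mem_setOf_eq, Finset.mem_image, Set.Finite.mem_toFinset,
        Sum.inr.injEq]
      exact ⟨fun ⟨a, ha, h⟩ => h ▸ ha, fun h => ⟨f, h, rfl⟩⟩
    refine ⟨hBfin.toFinset.image (Sum.inr : F → Q ⊕ F), ?_, ?_, ?_⟩
    · rw [Finset.card_image_of_injective _ Sum.inr_injective, ← hr B hB,
        Set.ncard_eq_toFinset_card B hBfin]
    · rw [hBset]; exact hB.indep
    · rw [hBset]; exact hspan B hB.spanning
  · -- exchange
    rintro b₁ b₂ ⟨hc₁, hi₁, hs₁⟩ ⟨hc₂, hi₂, hs₂⟩ x hx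
    rw [Finset.mem_sdiff] at hx
    obtain ⟨hx₁, hx₂⟩ := hx
    rw [set_eq_coe_toRight] at hi₁ hs₁ hi₂ hs₂
    set t₁ := b₁.toRight with ht₁
    set t₂ := b₂.toRight with ht₂
    have hrpos : 0 < r := hc₁ ▸ Finset.card_pos.2 ⟨x, hx₁⟩
    have hsum₁ : b₁.toLeft.card + t₁.card = r := by
      rw [Finset.card_toLeft_add_card_toRight, hc₁]
    have hsum₂ : b₂.toLeft.card + t₂.card = r := by
      rw [Finset.card_toLeft_add_card_toRight, hc₂]
    have hcard : ∀ y, y ∉ b₁ → (insert y (b₁.erase x)).card = r := by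
      intro y hy'
      rw [Finset.card_insert_of_notMem (fun h => hy' (Finset.mem_of_mem_erase h)),
        Finset.card_erase_of_mem hx₁, hc₁]
      omega
    obtain q | f := x
    · -- x = inl q
      by_cases hq : ∃ q' : Q, Sum.inl q' ∈ b₂ ∧ Sum.inl q' ∉ b₁
      · obtain ⟨q', hq'₂, hq'₁⟩ := hq
        refine ⟨Sum.inl q', Finset.mem_sdiff.2 ⟨hq'₂, hq'₁⟩, hcard _ hq'₁, ?_, ?_⟩ <;>
          rw [set_insert_inl, set_erase_inl, set_eq_coe_toRight]
        · exact hi₁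
        · exact hs₁
      · push_neg at hq
        have hsub : b₂.toLeft ⊆ b₁.toLeft.erase q := by
          intro q' h
          rw [Finset.mem_toLeft] at h
          refine Finset.mem_erase.2 ⟨?_, by simpa using hq q' h⟩
          rintro rfl; exact hx₂ h
        have hlt : t₁.card < t₂.card := by
          have := Finset.card_le_card hsub
          rw [Finset.card_erase_of_mem (by simpa using hx₁)] at this
          have h1 : 0 < b₁.toLeft.card := Finset.card_pos.2 ⟨q, by simpa using hx₁⟩
          omega
        have haug := hi₁.augment hi₂ (by
          rw [Set.encard_coe_eq_coe_finsetCard, Set.encard_coe_eq_coe_finsetCard]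
          exact_mod_cast hlt)
        obtain ⟨g, hg, hgi⟩ := haug
        have hg₂ : Sum.inr g ∈ b₂ := Finset.mem_toRight.1 (Finset.mem_coe.1 hg.1)
        have hg₁ : Sum.inr g ∉ b₁ := fun h => hg.2 (Finset.mem_coe.2 (Finset.mem_toRight.2 h))
        refine ⟨Sum.inr g, Finset.mem_sdiff.2 ⟨hg₂, hg₁⟩,
          hcard _ hg₁, ?_, ?_⟩ <;>
          rw [set_insert_inr, set_erase_inl, set_eq_coe_toRight]
        · exact hgi
        · exact hs₁.superset (Set.subset_insert _ _) (hNsub _)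
    · -- x = inr f
      have hf₁ : f ∈ (↑t₁ : Set F) := Finset.mem_coe.2 (Finset.mem_toRight.2 hx₁)
      have hf₂ : f ∉ (↑t₂ : Set F) := fun h => hx₂ (Finset.mem_toRight.1 h)
      set T' : Set F := (↑t₁ : Set F) \ {f} with hT'
      have hins : insert f T' = (↑t₁ : Set F) := by
        rw [hT', Set.insert_diff_singleton, Set.insert_eq_self.2 hf₁]
      have hT'i : M.Indep T' := hi₁.subset Set.diff_subset
      by_cases hsp : N.Spanning T'
      · by_cases hq : ∃ q' : Q, Sum.inl q' ∈ b₂ ∧ Sum.inl q' ∉ b₁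
        · obtain ⟨q', hq'₂, hq'₁⟩ := hq
          refine ⟨Sum.inl q', Finset.mem_sdiff.2 ⟨hq'₂, hq'₁⟩, hcard _ hq'₁, ?_, ?_⟩ <;>
            rw [set_insert_inl, set_erase_inr, set_eq_coe_toRight]
          · exact hT'i
          · exact hsp
        · push_neg at hq
          have hsub : b₂.toLeft ⊆ b₁.toLeft := fun q' h =>
            by simpa using hq q' (by simpa using h)
          have hle : t₁.card ≤ t₂.card := by
            have := Finset.card_le_card hsub
            omega
          have hT'enc : T'.encard < (↑t₂ : Set F).encard := by
            rw [hT', ← Finset.coe_erase, Set.encard_coe_eq_coe_finsetCard,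
              Set.encard_coe_eq_coe_finsetCard, Finset.card_erase_of_mem (by simpa using hf₁)]
            have h1 : 0 < t₁.card := Finset.card_pos.2 ⟨f, by simpa using hf₁⟩
            exact_mod_cast (by omega : t₁.card - 1 < t₂.card)
          obtain ⟨g, hg, hgi⟩ := hT'i.augment hi₂ hT'enc
          have hg₂ : Sum.inr g ∈ b₂ := Finset.mem_toRight.1 (Finset.mem_coe.1 hg.1)
          have hgf : g ≠ f := fun h => hf₂ (h ▸ hg.1)
          have hg₁ : Sum.inr g ∉ b₁ :=
            fun h => hg.2 ⟨Finset.mem_coe.2 (Finset.mem_toRight.2 h), hgf⟩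
          refine ⟨Sum.inr g, Finset.mem_sdiff.2 ⟨hg₂, hg₁⟩,
            hcard _ hg₁, ?_, ?_⟩ <;>
            rw [set_insert_inr, set_erase_inr, set_eq_coe_toRight]
          · exact hgi
          · exact hsp.superset (Set.subset_insert _ _) (hNsub _)
      · -- T' not spanning: pick g in t₂ outside N.closure T'
        have hex : ∃ g ∈ (↑t₂ : Set F), g ∉ N.closure T' := by
          by_contra h
          push_neg at h
          refine hsp (hspan_of_cl_eq T' ?_)
          have h2 := N.closure_subset_closure_of_subset_closure h
          rw [(Matroid.spanning_iff_closure_eq (hNsub _)).1 hs₂] at h2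
          exact h2
        obtain ⟨g, hg₂, hgcl⟩ := hex
        have hgT' : g ∉ T' := fun h => hgcl (N.subset_closure T' (hNsub _) h)
        have hgf : g ≠ f := fun h => hf₂ (h ▸ hg₂)
        have hg₁ : g ∉ (↑t₁ : Set F) := fun h => hgT' ⟨h, hgf⟩
        have hg₂' : Sum.inr g ∈ b₂ := Finset.mem_toRight.1 hg₂
        have hg₁' : Sum.inr g ∉ b₁ :=
          fun h => hg₁ (Finset.mem_coe.2 (Finset.mem_toRight.2 h))
        have hgi : M.Indep (insert g T') := by
          rw [hT'i.insert_indep_iff_of_notMem hgT']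
          exact ⟨hMsub {g} rfl, fun h => hgcl (hcl T' h)⟩
        have hgmem : g ∈ N.closure (insert f T') := by
          rw [hins, (Matroid.spanning_iff_closure_eq (hNsub _)).1 hs₁]
          exact hNsub {g} rfl
        have hfmem : f ∈ N.closure (insert g T') := Matroid.mem_closure_insert hgcl hgmem
        have hspan' : N.Spanning (insert g T') := by
          apply hspan_of_cl_eq
          have hsubcl : (↑t₁ : Set F) ⊆ N.closure (insert g T') := by
            rw [← hins]
            exact Set.insert_subset hfmem
              ((Set.subset_insert g T').trans (N.subset_closure _ (hNsub _)))
          have h2 := N.closure_subset_closure_of_subset_closure hsubcl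
          rw [(Matroid.spanning_iff_closure_eq (hNsub _)).1 hs₁] at h2
          exact h2
        refine ⟨Sum.inr g, Finset.mem_sdiff.2 ⟨hg₂', hg₁'⟩,
          hcard _ hg₁', ?_, ?_⟩ <;>
          rw [set_insert_inr, set_erase_inr, set_eq_coe_toRight]
        · exact hgi
        · exact hspan'
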